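/- arXiv:1202.6652 — 4 statements merged into one kernel-verified Lean document; each statement's English description precedes it below -/
import Mathlib

section
/- Let (⟨G,m⟩, p) be a minimally rigid d-periodic orbit framework on the fixed torus, i.e. it is infinitesimally rigid and |E| = d|V| - d. Then for every nonempty subset E' ⊆ E of edges, |E'| ≤ d|V(E')| - d, where V(E') denotes the set of vertices incident to at least one edge of E'. -/
open Matrix

/-- The row vector `z L ∈ ℝ^d` obtained from an integer vector `z ∈ ℤ^d` and the
lattice matrix `L`. -/
noncomputable def gainVec {d : ℕ} (L : Matrix (Fin d) (Fin d) ℝ) (z : Fin d → ℤ) :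
    Fin d → ℝ :=
  Matrix.vecMul (fun k => (z k : ℝ)) L

/-- An infinitesimal motion of the periodic orbit framework `(⟨G,m⟩,p)` on the fixed
torus with lattice matrix `L`:
`(u_{i(e)} - u_{j(e)}) · (p_{i(e)} - p_{j(e)} - m_e L) = 0` for every edge `e`. -/
def IsMotion (d : ℕ) {V E : Type*} (ie je : E → V) (m : E → Fin d → ℤ)
    (p : V → Fin d → ℝ) (L : Matrix (Fin d) (Fin d) ℝ) (u : V → Fin d → ℝ) : Prop :=
  ∀ e : E, (fun k => u (ie e) k - u (je e) k) ⬝ᵥ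
      (fun k => p (ie e) k - p (je e) k - gainVec L (m e) k) = 0

/-- The rigidity map: sends a candidate motion `u` to the vector of its edge constraints. -/
noncomputable def rigidityMap (d : ℕ) {V E : Type*} (ie je : E → V)
    (q : E → Fin d → ℝ) : (V → Fin d → ℝ) →ₗ[ℝ] (E → ℝ) where
  toFun u := fun e => (fun k => u (ie e) k - u (je e) k) ⬝ᵥ q e
  map_add' u v := by
    funext e
    simp only [dotProduct, Pi.add_apply]
    rw [← Finset.sum_add_distrib]
    exact Finset.sum_congr rfl fun k _ => by ring
  map_smul' c u := by
    funext e
    simp only [dotProduct, Pi.smul_apply, smul_eq_mul, RingHom.id_apply]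
    rw [Finset.mul_sum]
    exact Finset.sum_congr rfl fun k _ => by ring

/-- The map sending `c : ℝ^d` to the constant candidate motion `u ≡ c`. -/
noncomputable def constMap (d : ℕ) (V : Type*) : (Fin d → ℝ) →ₗ[ℝ] (V → Fin d → ℝ) :=
  LinearMap.pi fun _ => LinearMap.id

lemma constMap_mem_ker (d : ℕ) {V E : Type*} (ie je : E → V) (q : E → Fin d → ℝ)
    (c : Fin d → ℝ) : constMap d V c ∈ LinearMap.ker (rigidityMap d ie je q) := by
  simp only [LinearMap.mem_ker]
  funext e
  simp [rigidityMap, constMap, dotProduct]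

lemma finrank_fun_pi (d : ℕ) (V : Type*) [Fintype V] :
    Module.finrank ℝ (V → Fin d → ℝ) = Fintype.card V * d := by
  rw [Module.finrank_pi_fintype]
  simp [Module.finrank_fintype_fun_eq_card]

/-- If the rigidity map is surjective, then `|E| + d ≤ d |V|`. -/
lemma count_of_surjective (d : ℕ) {V E : Type*} [Fintype V] [Fintype E] [Nonempty V]
    (ie je : E → V) (q : E → Fin d → ℝ)
    (hs : Function.Surjective (rigidityMap d ie je q)) :
    Fintype.card E + d ≤ d * Fintype.card V := by
  set T := rigidityMap d ie je q
  have hinj : Function.Injective (constMap d V) := by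
    intro a b hab
    have := congrFun hab (Classical.arbitrary V)
    simpa [constMap] using this
  have hle : LinearMap.range (constMap d V) ≤ LinearMap.ker T := by
    rintro _ ⟨c, rfl⟩
    exact constMap_mem_ker d ie je q c
  have hker : d ≤ Module.finrank ℝ (LinearMap.ker T) := by
    have h1 : Module.finrank ℝ (LinearMap.range (constMap d V)) = d := by
      rw [LinearMap.finrank_range_of_inj hinj, Module.finrank_fintype_fun_eq_card,
        Fintype.card_fin]
    calc d = Module.finrank ℝ (LinearMap.range (constMap d V)) := h1.symm
      _ ≤ Module.finrank ℝ (LinearMap.ker T) := Submodule.finrank_mono hle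
  have hrange : Module.finrank ℝ (LinearMap.range T) = Fintype.card E := by
    rw [LinearMap.range_eq_top.2 hs, finrank_top, Module.finrank_fintype_fun_eq_card]
  have hrn := LinearMap.finrank_range_add_finrank_ker T
  rw [hrange, finrank_fun_pi] at hrn
  have hc : Fintype.card V * d = d * Fintype.card V := Nat.mul_comm _ _
  omega

/-- Periodic Maxwell count: if `(⟨G,m⟩,p)` is minimally rigid on the fixed torus
(infinitesimally rigid with `|E| = d|V| - d`), then every nonempty subset `E'` of edges
satisfies `|E'| ≤ d|V(E')| - d`, where `V(E')` is the set of vertices incident to `E'`. -/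
theorem minimally_rigid_subgraph_count (d : ℕ) (hd : 1 ≤ d)
    (V E : Type*) [Fintype V] [Fintype E] [DecidableEq V] [DecidableEq E]
    (ie je : E → V) (m : E → Fin d → ℤ) (p : V → Fin d → ℝ)
    (L : Matrix (Fin d) (Fin d) ℝ) (hL : IsUnit L)
    (hrigid : ∀ u : V → Fin d → ℝ, IsMotion d ie je m p L u → ∀ v w : V, u v = u w)
    (hcount : Fintype.card E = d * Fintype.card V - d) :
    ∀ E' : Finset E, E'.Nonempty →
      E'.card ≤ d * (E'.image ie ∪ E'.image je).card - d := by
  intro E' hne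
  obtain ⟨e0, he0⟩ := hne
  have hV : Nonempty V := ⟨ie e0⟩
  set q : E → Fin d → ℝ :=
    fun e => fun k => p (ie e) k - p (je e) k - gainVec L (m e) k with hq
  set T := rigidityMap d ie je q with hT
  -- the kernel of T is exactly the range of constMap
  have hker : LinearMap.ker T = LinearMap.range (constMap d V) := by
    apply le_antisymm
    · intro u hu
      have hmot : IsMotion d ie je m p L u := by
        intro e
        exact congrFun (LinearMap.mem_ker.1 hu) e
      refine ⟨u (Classical.arbitrary V), ?_⟩
      funext v
      exact hrigid u hmot v (Classical.arbitrary V) ▸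
        (hrigid u hmot (Classical.arbitrary V) v)
    · rintro _ ⟨c, rfl⟩
      exact constMap_mem_ker d ie je q c
  have hinj : Function.Injective (constMap d V) := by
    intro a b hab
    have := congrFun hab (Classical.arbitrary V)
    simpa [constMap] using this
  have hkerrank : Module.finrank ℝ (LinearMap.ker T) = d := by
    rw [hker, LinearMap.finrank_range_of_inj hinj, Module.finrank_fintype_fun_eq_card,
      Fintype.card_fin]
  have hVpos : 1 ≤ Fintype.card V := Fintype.card_pos
  have hrn := LinearMap.finrank_range_add_finrank_ker T
  rw [hkerrank, finrank_fun_pi] at hrn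
  -- T is surjective
  have hsurj : Function.Surjective T := by
    rw [← LinearMap.range_eq_top]
    apply Submodule.eq_top_of_finrank_eq
    rw [Module.finrank_fintype_fun_eq_card]
    have : d ≤ d * Fintype.card V := Nat.le_mul_of_pos_right d hVpos
    have hc : Fintype.card V * d = d * Fintype.card V := Nat.mul_comm _ _
    omega
  -- restricted framework on the subtypes
  set V' : Finset V := E'.image ie ∪ E'.image je with hV'
  have hie : ∀ e : {x // x ∈ E'}, ie e.1 ∈ V' := fun e =>
    Finset.mem_union_left _ (Finset.mem_image_of_mem ie e.2)
  have hje : ∀ e : {x // x ∈ E'}, je e.1 ∈ V' := fun e =>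
    Finset.mem_union_right _ (Finset.mem_image_of_mem je e.2)
  haveI : Nonempty {v // v ∈ V'} := ⟨⟨ie e0, hie ⟨e0, he0⟩⟩⟩
  set ie' : {x // x ∈ E'} → {v // v ∈ V'} := fun e => ⟨ie e.1, hie e⟩
  set je' : {x // x ∈ E'} → {v // v ∈ V'} := fun e => ⟨je e.1, hje e⟩
  set q' : {x // x ∈ E'} → Fin d → ℝ := fun e => q e.1
  have hssurj : Function.Surjective (rigidityMap d ie' je' q') := by
    intro y
    obtain ⟨u, hu⟩ := hsurj (fun e => if h : e ∈ E' then y ⟨e, h⟩ else 0)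
    refine ⟨fun v => u v.1, ?_⟩
    funext e
    have : rigidityMap d ie' je' q' (fun v => u v.1) e = T u e.1 := rfl
    rw [this, hu]
    simp [e.2]
  have hmain := count_of_surjective d ie' je' q' hssurj
  rw [Fintype.card_coe, Fintype.card_coe] at hmain
  omega
end

section
/- Let (⟨G,m⟩, p) be a d-periodic orbit framework on the fixed torus with lattice matrix L, let B be an invertible d×d real matrix and t ∈ ℝ^d, and let A : ℝ^d → ℝ^d be the affine transformation A(x) = xB + t. Then a subset of edges of ⟨G,m⟩ is independent in the rigidity matrix computed with configuration A∘p and lattice matrix LB if and only if it is independent in the rigidity matrix computed with configuration p and lattice matrix L; in particular, rank R₀ is the same for both. -/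
open Matrix

/-- The fixed torus rigidity matrix `R₀(⟨G,m⟩,p)`: the row indexed by `e` has the entries
of `p_{i(e)} - (p_{j(e)} + m_e L)` in the `d` columns of vertex `i(e)`, the entries of
`(p_{j(e)} + m_e L) - p_{i(e)}` in the `d` columns of vertex `j(e)` and zeros elsewhere;
for a loop (`i(e) = j(e)`) the two contributions are added. -/
noncomputable def rigidityMatrix (d : ℕ) {V E : Type*} [DecidableEq V]
    (ie je : E → V) (m : E → Fin d → ℤ) (p : V → Fin d → ℝ)
    (L : Matrix (Fin d) (Fin d) ℝ) : Matrix E (V × Fin d) ℝ :=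
  Matrix.of fun e vk =>
    (if vk.1 = ie e then p (ie e) vk.2 - (p (je e) vk.2 + gainVec L (m e) vk.2) else 0)
      + (if vk.1 = je e then (p (je e) vk.2 + gainVec L (m e) vk.2) - p (ie e) vk.2 else 0)

/-- The block diagonal matrix with copies of `B` in each vertex block. -/
noncomputable def blockB {d : ℕ} (V : Type*) [DecidableEq V] [Fintype V]
    (B : Matrix (Fin d) (Fin d) ℝ) : Matrix (V × Fin d) (V × Fin d) ℝ :=
  Matrix.reindex (Equiv.prodComm (Fin d) V) (Equiv.prodComm (Fin d) V)
    (Matrix.blockDiagonal fun _ : V => B)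

lemma blockB_apply {d : ℕ} {V : Type*} [DecidableEq V] [Fintype V]
    (B : Matrix (Fin d) (Fin d) ℝ) (vl wk : V × Fin d) :
    blockB V B vl wk = if vl.1 = wk.1 then B vl.2 wk.2 else 0 := by
  obtain ⟨v, l⟩ := vl; obtain ⟨w, k⟩ := wk
  simp [blockB, Matrix.blockDiagonal_apply]

lemma blockB_det {d : ℕ} {V : Type*} [DecidableEq V] [Fintype V]
    (B : Matrix (Fin d) (Fin d) ℝ) (hB : IsUnit B) : IsUnit (blockB V B).det := by
  rw [blockB, Matrix.det_reindex_self, Matrix.det_blockDiagonal, Finset.prod_const]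
  exact ((Matrix.isUnit_iff_isUnit_det B).mp hB).pow _

lemma key (d : ℕ) {V E : Type*} [DecidableEq V] [Fintype V]
    (ie je : E → V) (m : E → Fin d → ℤ) (p : V → Fin d → ℝ)
    (L B : Matrix (Fin d) (Fin d) ℝ) (t : Fin d → ℝ) :
    rigidityMatrix d ie je m (fun v => Matrix.vecMul (p v) B + t) (L * B)
      = rigidityMatrix d ie je m p L * blockB V B := by
  ext e ⟨v, k⟩
  have hrhs : (rigidityMatrix d ie je m p L * blockB V B) e (v, k)
      = ∑ l, rigidityMatrix d ie je m p L e (v, l) * B l k := by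
    rw [Matrix.mul_apply, Fintype.sum_prod_type]
    simp only [blockB_apply, mul_ite, mul_zero]
    rw [Finset.sum_comm]
    simp [Finset.sum_ite_eq']
  rw [hrhs]
  have hm : ∀ k : Fin d, ∑ x, (m e x : ℝ) * (L * B) x k
      = ∑ x, (∑ y, (m e y : ℝ) * L y x) * B x k := by
    intro k
    simp only [Matrix.mul_apply, Finset.mul_sum, Finset.sum_mul, mul_assoc]
    exact Finset.sum_comm ..

  simp only [rigidityMatrix, Matrix.of_apply, gainVec, Matrix.vecMul_vecMul]
  by_cases h1 : v = ie e <;> by_cases h2 : v = je e <;>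
    simp [h1, h2, Matrix.vecMul, dotProduct, Finset.sum_sub_distrib,
      Finset.sum_add_distrib, sub_mul, add_mul, Finset.mul_sum, hm] <;> split_ifs <;> ring

/-- Affine invariance of independence on the fixed torus: for the affine map
`A(x) = xB + t` (with `B` invertible), a subset of edges is independent in the rigidity
matrix computed with configuration `A ∘ p` and lattice matrix `L * B` iff it is
independent in the rigidity matrix computed with `p` and `L`; in particular the two
rigidity matrices have the same rank. -/
theorem affine_invariance (d : ℕ) (hd : 1 ≤ d)
    (V E : Type*) [Fintype V] [Fintype E] [DecidableEq V]
    (ie je : E → V) (m : E → Fin d → ℤ) (p : V → Fin d → ℝ)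
    (L B : Matrix (Fin d) (Fin d) ℝ) (hL : IsUnit L) (hB : IsUnit B)
    (t : Fin d → ℝ) :
    (∀ S : Set E,
      (LinearIndependent ℝ fun e : S =>
        rigidityMatrix d ie je m (fun v => Matrix.vecMul (p v) B + t) (L * B) e.1) ↔
      (LinearIndependent ℝ fun e : S => rigidityMatrix d ie je m p L e.1)) ∧
    (rigidityMatrix d ie je m (fun v => Matrix.vecMul (p v) B + t) (L * B)).rank =
      (rigidityMatrix d ie je m p L).rank := by
  have hdet := blockB_det (V := V) B hB
  have hMunit : IsUnit (blockB V B) := (Matrix.isUnit_iff_isUnit_det _).mpr hdet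
  have hinj : Function.Injective (blockB V B).vecMulLinear := by
    rw [Matrix.coe_vecMulLinear]
    exact Matrix.vecMul_injective_iff_isUnit.mpr hMunit
  rw [key d ie je m p L B t]
  constructor
  · intro S
    have : (fun e : S => (rigidityMatrix d ie je m p L * blockB V B) e.1)
        = (blockB V B).vecMulLinear ∘ fun e : S => rigidityMatrix d ie je m p L e.1 := by
      funext e
      ext vk
      simp [Matrix.mul_apply, Matrix.vecMul, dotProduct]
    rw [this]
    exact (blockB V B).vecMulLinear.linearIndependent_iff (LinearMap.ker_eq_bot.mpr hinj)
  · exact Matrix.rank_mul_eq_left_of_isUnit_det _ _ hdet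
end

section
/- Let (⟨G,m⟩, p) be a minimally rigid d-periodic orbit framework on the fixed torus, i.e. it is infinitesimally rigid and |E| = d|V| - d. Then for every subset of edges Y ⊆ E whose incident vertex set V(Y) satisfies |V(Y)| ≥ d, we have |Y| ≤ d|V(Y)| - (d+1 choose 2) + Σ_{i=1}^{k}(d - i), where k is the rank of the gain space of Y (note Σ_{i=1}^{k}(d - i) = kd - k(k+1)/2). -/
set_option maxHeartbeats 1000000

open Matrix

/-- `IsWalk ie je a w b` : the list `w` of edges, each traversed forwards (`true`) or
backwards (`false`), forms a walk in the multigraph from vertex `a` to vertex `b`. -/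
def IsWalk {V E : Type*} (ie je : E → V) : V → List (E × Bool) → V → Prop
  | a, [], b => a = b
  | a, ed :: rest, b =>
      a = (if ed.2 then ie ed.1 else je ed.1) ∧
        IsWalk ie je (if ed.2 then je ed.1 else ie ed.1) rest b

/-- The net gain of a walk: `+m_e` for forwards-traversed edges and `-m_e` for
backwards-traversed edges. -/
def netGain {d : ℕ} {E : Type*} (m : E → Fin d → ℤ) (w : List (E × Bool)) : Fin d → ℤ :=
  (w.map fun ed => if ed.2 then m ed.1 else -m ed.1).sum

/-- The gain space of the subgraph spanned by a set `Y` of edges: the `ℤ`-submodule of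
`ℤ^d` generated by the net gains of the closed walks using only edges of `Y`. -/
def gainSpaceOf (d : ℕ) {V E : Type*} (ie je : E → V) (m : E → Fin d → ℤ)
    (Y : Set E) : Submodule ℤ (Fin d → ℤ) :=
  Submodule.span ℤ
    {g | ∃ (v : V) (w : List (E × Bool)),
      IsWalk ie je v w v ∧ (∀ ed ∈ w, ed.1 ∈ Y) ∧ netGain m w = g}

noncomputable section

open Module Submodule

namespace PeriodicAux

/-! ### Walk lemmas -/

variable {V E : Type*} (ie je : E → V)

lemma isWalk_append {a b c : V} {w w' : List (E × Bool)}
    (h : IsWalk ie je a w b) (h' : IsWalk ie je b w' c) :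
    IsWalk ie je a (w ++ w') c := by
  induction w generalizing a with
  | nil => cases h; exact h'
  | cons ed rest IH => exact ⟨h.1, IH h.2⟩

/-- The reversed walk. -/
def revWalk (w : List (E × Bool)) : List (E × Bool) :=
  (w.map fun ed => (ed.1, !ed.2)).reverse

lemma isWalk_rev {a b : V} {w : List (E × Bool)}
    (h : IsWalk ie je a w b) : IsWalk ie je b (revWalk w) a := by
  induction w generalizing a with
  | nil => cases h; exact rfl
  | cons ed rest IH =>
      obtain ⟨ha, hrest⟩ := h
      have h1 : IsWalk ie je b (revWalk rest) (if ed.2 then je ed.1 else ie ed.1) :=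
        IH hrest
      have h2 : IsWalk ie je (if ed.2 then je ed.1 else ie ed.1) [(ed.1, !ed.2)] a := by
        cases hb : ed.2 <;> simp [IsWalk, hb, ha]
      have := isWalk_append ie je h1 h2
      simpa [revWalk, List.reverse_cons] using this

lemma revWalk_edges {PR : E → Prop} {w : List (E × Bool)}
    (h : ∀ ed ∈ w, PR ed.1) : ∀ ed ∈ revWalk w, PR ed.1 := by
  intro ed hed
  simp only [revWalk, List.mem_reverse, List.mem_map] at hed
  obtain ⟨a, ha, rfl⟩ := hed
  exact h a ha

variable {d : ℕ} (m : E → Fin d → ℤ)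

lemma netGain_cons (ed : E × Bool) (w : List (E × Bool)) :
    netGain m (ed :: w) = (if ed.2 then m ed.1 else -m ed.1) + netGain m w := by
  simp [netGain]

lemma netGain_append (w w' : List (E × Bool)) :
    netGain m (w ++ w') = netGain m w + netGain m w' := by
  simp [netGain]

lemma netGain_rev (w : List (E × Bool)) :
    netGain m (revWalk w) = -netGain m w := by
  induction w with
  | nil => simp [revWalk, netGain]
  | cons ed rest IH =>
      have h : revWalk (ed :: rest) = revWalk rest ++ [(ed.1, !ed.2)] := by
        simp [revWalk]
      rw [h, netGain_append, IH, netGain_cons]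
      cases hb : ed.2 <;> simp [netGain, hb]

lemma netGain_single (ed : E × Bool) : netGain m [ed] = if ed.2 then m ed.1 else -m ed.1 := by
  simp [netGain]

/-! ### Arithmetic lemmas -/

lemma choose_helper (r a : ℕ) : (a + r).choose 2 + r ≤ a.choose 2 + r * (a + r) := by
  induction r with
  | zero => simp
  | succ r IH =>
      have h2 : (a + (r + 1)).choose 2 = (a + r).choose 2 + (a + r) := by
        have h : a + (r + 1) = (a + r) + 1 := by ring
        rw [h, Nat.choose_succ_succ (a + r) 1, Nat.choose_one_right, Nat.add_comm]
      have h3 : (r + 1) * (a + (r + 1)) = r * (a + r) + (a + 2 * r + 1) := by ring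
      generalize hc1 : (a + (r + 1)).choose 2 = c1 at *
      generalize hc2 : (a + r).choose 2 = c2 at *
      generalize hc3 : a.choose 2 = c3 at *
      generalize ht : r * (a + r) = t at *
      omega

lemma sum_range_id_choose (n : ℕ) : (∑ i ∈ Finset.range n, i) = n.choose 2 := by
  induction n with
  | zero => simp
  | succ n IH =>
      rw [Finset.sum_range_succ, IH, Nat.choose_succ_succ n 1, Nat.choose_one_right,
        Nat.add_comm]

lemma card_lt_pairs (n : ℕ) :
    Fintype.card {pr : Fin n × Fin n // pr.1 < pr.2} = n.choose 2 := by
  have e : {pr : Fin n × Fin n // pr.1 < pr.2} ≃ (Σ j : Fin n, Fin j.val) :=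
    { toFun := fun x => ⟨x.1.2, ⟨x.1.1.val, x.2⟩⟩
      invFun := fun s => ⟨(⟨s.2.val, lt_trans s.2.isLt s.1.isLt⟩, s.1), s.2.isLt⟩
      left_inv := fun x => rfl
      right_inv := fun s => rfl }
  rw [Fintype.card_congr e, Fintype.card_sigma]
  simp only [Fintype.card_fin]
  rw [Fin.sum_univ_eq_sum_range (fun i => i) n, sum_range_id_choose]

lemma sum_Icc_identity (d k : ℕ) (hk : k ≤ d) :
    (∑ i ∈ Finset.Icc 1 k, ((d : ℤ) - (i : ℤ)))
      = ((d + 1).choose 2 : ℤ) - d - ((d - k).choose 2 : ℤ) := by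
  induction k with
  | zero =>
      rw [show Finset.Icc 1 0 = (∅ : Finset ℕ) by rfl]
      have h : (d + 1).choose 2 = d.choose 2 + d := by
        rw [Nat.choose_succ_succ d 1, Nat.choose_one_right, Nat.add_comm]
      rw [Finset.sum_empty, Nat.sub_zero, h]
      push_cast
      ring
  | succ k IH =>
      have hk' : k ≤ d := Nat.le_of_succ_le hk
      rw [Finset.sum_Icc_succ_top (by omega), IH hk']
      have hmk : d - k = (d - (k + 1)) + 1 := by omega
      have h2 : (d - k).choose 2 = (d - (k + 1)).choose 2 + (d - (k + 1)) := by
        rw [hmk, Nat.choose_succ_succ (d - (k + 1)) 1, Nat.choose_one_right, Nat.add_comm]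
      have h3 : ((d - (k + 1) : ℕ) : ℤ) = (d : ℤ) - ((k : ℤ) + 1) := by
        omega
      have h4 : ((d - k : ℕ) : ℤ) = (d : ℤ) - (k : ℤ) := by omega
      rw [h2]
      push_cast
      omega

/-! ### gainVec lemmas -/

lemma gainVec_add {d : ℕ} (L : Matrix (Fin d) (Fin d) ℝ) (z1 z2 : Fin d → ℤ) :
    gainVec L (z1 + z2) = gainVec L z1 + gainVec L z2 := by
  funext kk
  simp only [gainVec, Matrix.vecMul, dotProduct, Pi.add_apply, Int.cast_add]
  rw [← Finset.sum_add_distrib]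
  exact Finset.sum_congr rfl fun j _ => by ring

lemma gainVec_sub {d : ℕ} (L : Matrix (Fin d) (Fin d) ℝ) (z1 z2 : Fin d → ℤ) :
    gainVec L (z1 - z2) = gainVec L z1 - gainVec L z2 := by
  funext kk
  simp only [gainVec, Matrix.vecMul, dotProduct, Pi.sub_apply, Int.cast_sub]
  rw [← Finset.sum_sub_distrib]
  exact Finset.sum_congr rfl fun j _ => by ring

lemma gainVec_zsmul {d : ℕ} (L : Matrix (Fin d) (Fin d) ℝ) (c : ℤ) (z : Fin d → ℤ) :
    gainVec L (c • z) = (c : ℝ) • gainVec L z := by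
  funext kk
  simp only [gainVec, Matrix.vecMul, dotProduct, Pi.smul_apply, smul_eq_mul,
    Int.cast_mul, Finset.mul_sum]
  exact Finset.sum_congr rfl fun j _ => by ring

/-! ### The abstract motion space and the core dimension bound -/

universe u v

variable {S : Type u} {Y : Type v}

/-- The abstract motion space. -/
def mSpace (H : Type) [NormedAddCommGroup H] [InnerProductSpace ℝ H]
    (iY jY : Y → S) (q : S → H) (h : Y → H) : Submodule ℝ (S → H) :=
  ⨅ e : Y, LinearMap.ker
    (((innerSL ℝ (q (iY e) - q (jY e) - h e)).toLinearMap).comp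
      ((LinearMap.proj (iY e) : (S → H) →ₗ[ℝ] H) - LinearMap.proj (jY e)))

lemma mem_mSpace {H : Type} [NormedAddCommGroup H] [InnerProductSpace ℝ H]
    {iY jY : Y → S} {q : S → H} {h : Y → H} {u : S → H} :
    u ∈ mSpace H iY jY q h ↔
      ∀ e : Y, (inner ℝ (q (iY e) - q (jY e) - h e) (u (iY e) - u (jY e)) : ℝ) = 0 := by
  simp only [mSpace, Submodule.mem_iInf, LinearMap.mem_ker, LinearMap.comp_apply,
    LinearMap.sub_apply, LinearMap.proj_apply, ContinuousLinearMap.coe_coe, innerSL_apply_apply]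

/-- Core dimension bound for the motion space. -/
lemma core : ∀ (d : ℕ) (H : Type) [NormedAddCommGroup H] [InnerProductSpace ℝ H]
    [FiniteDimensional ℝ H] (S : Type u) (Y : Type v) [Fintype S] [Fintype Y]
    (iY jY : Y → S) (q : S → H) (h : Y → H),
    finrank ℝ H = d → d ≤ Fintype.card S →
    d + (d - finrank ℝ (span ℝ (Set.range h))).choose 2
      ≤ finrank ℝ (mSpace H iY jY q h) := by
  intro d
  induction d using Nat.strong_induction_on with
  | _ d IH =>
  intro H _ _ _ S Y _ _ iY jY q h hH hcard
  rcases Nat.eq_zero_or_pos d with hd0 | hdpos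
  · subst hd0
    simp only [Nat.zero_sub, Nat.zero_add]
    exact Nat.zero_le _
  have hSne : Nonempty S := Fintype.card_pos_iff.mp (lt_of_lt_of_le hdpos hcard)
  obtain ⟨v0⟩ := hSne
  set G : Submodule ℝ H := span ℝ (Set.range h) with hG
  set k' : ℕ := finrank ℝ G with hk'
  by_cases hdeg :
      ∃ A : H →ₗ[ℝ] H, A ≠ 0 ∧ (∀ e, A (h e) = 0) ∧ ∀ v, A (q v - q v0) = 0
  · -- degenerate case: split off the kernel of A₀ and recurse
    obtain ⟨A₀, hA0ne, hA0h, hA0q⟩ := hdeg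
    set K : Submodule ℝ H := LinearMap.ker A₀ with hK
    set dK : ℕ := finrank ℝ K with hdK
    have hKlt : dK < d := by
      rw [hdK, ← hH]
      exact Submodule.finrank_lt
        (fun hh => hA0ne (LinearMap.ker_eq_top.mp hh))
    set q' : S → K := fun v => ⟨q v - q v0, hA0q v⟩ with hq'
    set h' : Y → K := fun e => ⟨h e, hA0h e⟩ with hh'
    have hIH := IH dK hKlt ↥K S Y iY jY q' h' rfl (le_trans (le_of_lt hKlt) hcard)
    have hspan : Submodule.map K.subtype (span ℝ (Set.range h')) = span ℝ (Set.range h) := by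
      rw [Submodule.map_span]
      congr 1
      ext x
      simp only [Set.mem_image, Set.mem_range]
      constructor
      · rintro ⟨y, ⟨e, rfl⟩, rfl⟩; exact ⟨e, rfl⟩
      · rintro ⟨e, rfl⟩; exact ⟨h' e, ⟨e, rfl⟩, rfl⟩
    have hk'' : finrank ℝ (span ℝ (Set.range h')) = k' := by
      rw [hk', hG, ← hspan]
      exact (Submodule.equivMapOfInjective K.subtype (Submodule.injective_subtype K)
        (span ℝ (Set.range h'))).finrank_eq
    rw [hk''] at hIH
    have hGK : G ≤ K := by
      rw [hG]
      refine span_le.mpr ?_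
      rintro x ⟨e, rfl⟩
      exact LinearMap.mem_ker.mpr (hA0h e)
    have hk'le : k' ≤ dK := by
      rw [hk', hdK]; exact Submodule.finrank_mono hGK
    set M' := mSpace ↥K iY jY q' h' with hM'
    set Kp := Kᗮ with hKp
    set Ξ : (↥M' × (S → ↥Kp)) →ₗ[ℝ] (S → H) := LinearMap.pi (fun v =>
      (K.subtype.comp ((LinearMap.proj v).comp M'.subtype)).comp
          (LinearMap.fst ℝ ↥M' (S → ↥Kp))
        + (Kp.subtype.comp (LinearMap.proj v)).comp
          (LinearMap.snd ℝ ↥M' (S → ↥Kp))) with hΞ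
    have hΞapp : ∀ (w : ↥M') (s : S → ↥Kp) (v_ : S),
        Ξ (w, s) v_ = ↑(w.1 v_) + ↑(s v_) := fun w s v_ => rfl
    have hx' : ∀ e : Y, ((q' (iY e) - q' (jY e) - h' e : K) : H)
        = q (iY e) - q (jY e) - h e := by
      intro e
      simp only [hq', hh', AddSubgroupClass.coe_sub]
      abel
    have hΞrange : LinearMap.range Ξ ≤ mSpace H iY jY q h := by
      rintro u ⟨⟨w, s⟩, rfl⟩
      rw [mem_mSpace]
      intro e
      have h1 : Ξ (w, s) (iY e) - Ξ (w, s) (jY e)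
          = ((w.1 (iY e) - w.1 (jY e) : K) : H) + ((s (iY e) - s (jY e) : Kp) : H) := by
        rw [hΞapp, hΞapp]
        push_cast
        abel
      rw [h1, ← hx' e, inner_add_right]
      have h2 : (inner ℝ ((q' (iY e) - q' (jY e) - h' e : K) : H)
          ((w.1 (iY e) - w.1 (jY e) : K) : H) : ℝ) = 0 := by
        rw [← Submodule.coe_inner]
        exact mem_mSpace.mp w.2 e
      have h3 : (inner ℝ ((q' (iY e) - q' (jY e) - h' e : K) : H)
          ((s (iY e) - s (jY e) : Kp) : H) : ℝ) = 0 :=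
        inner_right_of_mem_orthogonal (SetLike.coe_mem _) (SetLike.coe_mem _)
      rw [h2, h3, add_zero]
    have hΞinj : Function.Injective Ξ := by
      refine LinearMap.ker_eq_bot.mp (LinearMap.ker_eq_bot'.mpr ?_)
      rintro ⟨w, s⟩ h0
      have hz : ∀ v_ : S, (↑(w.1 v_) : H) + ↑(s v_) = 0 := by
        intro v_
        have := congrFun h0 v_
        rwa [hΞapp] at this
      have hws : ∀ v_ : S, w.1 v_ = 0 ∧ s v_ = 0 := by
        intro v_
        have h1 : (↑(w.1 v_) : H) ∈ K := SetLike.coe_mem _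
        have h2 : (↑(w.1 v_) : H) ∈ Kᗮ := by
          have he : (↑(w.1 v_) : H) = -↑(s v_) := eq_neg_of_add_eq_zero_left (hz v_)
          rw [he]
          exact neg_mem (SetLike.coe_mem _)
        have h3 : (↑(w.1 v_) : H) = 0 :=
          Submodule.disjoint_def.mp (Submodule.orthogonal_disjoint K) _ h1 h2
        have h4 : (↑(s v_) : H) = 0 := by
          have := hz v_
          rw [h3, zero_add] at this
          exact this
        exact ⟨Subtype.ext h3, Subtype.ext h4⟩
      have hw0 : w = 0 := Subtype.ext (funext fun v_ => (hws v_).1)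
      have hs0 : s = 0 := funext fun v_ => (hws v_).2
      rw [hw0, hs0]; rfl
    have hfr : finrank ℝ (↥M' × (S → ↥Kp))
        = finrank ℝ M' + Fintype.card S * finrank ℝ Kp := by
      rw [Module.finrank_prod, Module.finrank_pi_fintype]
      simp [Finset.sum_const, smul_eq_mul]
    have hle1 : finrank ℝ (↥M' × (S → ↥Kp)) ≤ finrank ℝ (mSpace H iY jY q h) := by
      rw [← LinearMap.finrank_range_of_inj hΞinj]
      exact Submodule.finrank_mono hΞrange
    have horth : dK + finrank ℝ Kp = d := by
      rw [hdK, hKp, ← hH]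
      exact Submodule.finrank_add_finrank_orthogonal K
    have key2 : (d - k').choose 2 + (d - dK) ≤ (dK - k').choose 2 + (d - k') * (d - dK) := by
      have har : d - k' = (dK - k') + (d - dK) := by omega
      have hc := choose_helper (d - dK) (dK - k')
      rw [← har, Nat.mul_comm] at hc
      exact hc
    have hmul : (d - k') * (d - dK) ≤ Fintype.card S * (d - dK) :=
      Nat.mul_le_mul_right _ (le_trans (Nat.sub_le d k') hcard)
    have hKpfr : finrank ℝ Kp = d - dK := by omega
    have hfinal : d + (d - k').choose 2
        ≤ dK + (dK - k').choose 2 + Fintype.card S * (d - dK) := by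
      generalize hc1 : (d - k').choose 2 = c1 at key2 ⊢
      generalize hc2 : (dK - k').choose 2 = c2 at key2 ⊢
      generalize ht1 : (d - k') * (d - dK) = t1 at key2 hmul
      generalize ht2 : Fintype.card S * (d - dK) = t2 at hmul ⊢
      omega
    calc d + (d - k').choose 2
        ≤ dK + (dK - k').choose 2 + Fintype.card S * (d - dK) := hfinal
      _ ≤ finrank ℝ M' + Fintype.card S * (d - dK) := Nat.add_le_add_right hIH _
      _ = finrank ℝ M' + Fintype.card S * finrank ℝ Kp := by rw [hKpfr]
      _ = finrank ℝ (↥M' × (S → ↥Kp)) := hfr.symm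
      _ ≤ _ := hle1
  · -- nondegenerate case: skew "rotations" supported on Gᗮ plus translations
    set P := Gᗮ with hP
    have horth : k' + finrank ℝ P = d := by
      rw [hk', hP, ← hH]
      exact Submodule.finrank_add_finrank_orthogonal G
    set b := stdOrthonormalBasis ℝ ↥P with hb
    set D := {pr : Fin (finrank ℝ ↥P) × Fin (finrank ℝ ↥P) // pr.1 < pr.2} with hD
    set Am : D → (H →ₗ[ℝ] H) := fun pr =>
      ((innerSL ℝ ((b pr.1.1 : ↥P) : H)).toLinearMap).smulRight ((b pr.1.2 : ↥P) : H)
        - ((innerSL ℝ ((b pr.1.2 : ↥P) : H)).toLinearMap).smulRight ((b pr.1.1 : ↥P) : H)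
      with hAm
    have hAmApply : ∀ (pr : D) (x : H), Am pr x
        = (inner ℝ ((b pr.1.1 : ↥P) : H) x : ℝ) • ((b pr.1.2 : ↥P) : H)
          - (inner ℝ ((b pr.1.2 : ↥P) : H) x : ℝ) • ((b pr.1.1 : ↥P) : H) :=
      fun pr x => rfl
    set Aof : (D → ℝ) → (H →ₗ[ℝ] H) := fun c => ∑ p : D, c p • Am p with hAof
    have hAofApply : ∀ (c : D → ℝ) (x : H), Aof c x = ∑ p : D, c p • Am p x := by
      intro c x
      rw [hAof]
      simp [LinearMap.sum_apply, LinearMap.smul_apply]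
    have hbP : ∀ i, ((b i : ↥P) : H) ∈ Gᗮ := fun i => SetLike.coe_mem _
    have hhG : ∀ e, h e ∈ G := fun e => subset_span ⟨e, rfl⟩
    have hAmh : ∀ (pr : D) (e : Y), Am pr (h e) = 0 := by
      intro pr e
      rw [hAmApply]
      rw [inner_left_of_mem_orthogonal (hhG e) (hbP _),
        inner_left_of_mem_orthogonal (hhG e) (hbP _)]
      simp
    have hAofh : ∀ c e, Aof c (h e) = 0 := by
      intro c e
      rw [hAofApply]
      simp [hAmh]
    set Φ : ((D → ℝ) × H) →ₗ[ℝ] (S → H) := LinearMap.pi (fun v =>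
      ((∑ p : D, (LinearMap.proj p : (D → ℝ) →ₗ[ℝ] ℝ).smulRight (Am p (q v - q v0))).comp
          (LinearMap.fst ℝ (D → ℝ) H))
        + LinearMap.snd ℝ (D → ℝ) H) with hΦ
    have hΦapp : ∀ (c : D → ℝ) (t : H) (v : S),
        Φ (c, t) v = Aof c (q v - q v0) + t := by
      intro c t v
      rw [hΦ, hAofApply]
      simp [LinearMap.pi_apply, LinearMap.sum_apply, LinearMap.smulRight_apply,
        LinearMap.proj_apply]
    have hAmskew : ∀ (pr : D) (x : H), (inner ℝ x (Am pr x) : ℝ) = 0 := by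
      intro pr x
      rw [hAmApply, inner_sub_right, inner_smul_right, inner_smul_right,
        real_inner_comm x ((b pr.1.1 : ↥P) : H), real_inner_comm x ((b pr.1.2 : ↥P) : H)]
      ring
    have hΦrange : LinearMap.range Φ ≤ mSpace H iY jY q h := by
      rintro u ⟨⟨c, t⟩, rfl⟩
      rw [mem_mSpace]
      intro e
      have hdiff : Φ (c, t) (iY e) - Φ (c, t) (jY e)
          = Aof c (q (iY e) - q (jY e) - h e) := by
        have key : ∀ X Z T : H, X + T - (Z + T) = X - Z := fun X Z T => by abel
        rw [hΦapp, hΦapp, key, ← map_sub (Aof c)]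
        have h2 : (q (iY e) - q v0) - (q (jY e) - q v0)
            = (q (iY e) - q (jY e) - h e) + h e := by abel
        rw [h2, map_add, hAofh, add_zero]
      rw [hdiff, hAofApply, inner_sum]
      refine Finset.sum_eq_zero fun p _ => ?_
      rw [inner_smul_right, hAmskew, mul_zero]
    have hΦinj : Function.Injective Φ := by
      refine LinearMap.ker_eq_bot.mp (LinearMap.ker_eq_bot'.mpr ?_)
      rintro ⟨c, t⟩ h0
      have ht : t = 0 := by
        have h1 := congrFun h0 v0
        rw [hΦapp] at h1
        simpa using h1
      have hq0 : ∀ v, Aof c (q v - q v0) = 0 := by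
        intro v
        have h1 := congrFun h0 v
        rw [hΦapp, ht, add_zero] at h1
        exact h1
      have hA0 : Aof c = 0 := by
        by_contra hne
        exact hdeg ⟨Aof c, hne, hAofh c, hq0⟩
      have hinner : ∀ i j, (inner ℝ ((b i : ↥P) : H) ((b j : ↥P) : H) : ℝ)
          = if i = j then 1 else 0 := by
        intro i j
        rw [← Submodule.coe_inner]
        exact orthonormal_iff_ite.mp b.orthonormal i j
      have hc : ∀ p : D, c p = 0 := by
        intro p
        have h1 : (inner ℝ ((b p.1.2 : ↥P) : H) (Aof c ((b p.1.1 : ↥P) : H)) : ℝ) = c p := by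
          rw [hAofApply, inner_sum]
          rw [Finset.sum_eq_single p]
          · rw [inner_smul_right, hAmApply, inner_sub_right, inner_smul_right,
              inner_smul_right]
            simp only [hinner]
            have hne : p.1.2 ≠ p.1.1 := ne_of_gt p.2
            rw [if_neg hne, if_true]
            ring
          · intro p' _ hnep
            rw [inner_smul_right, hAmApply, inner_sub_right, inner_smul_right,
              inner_smul_right]
            simp only [hinner]
            have hz : (if p'.1.1 = p.1.1 then (1:ℝ) else 0) * (if p.1.2 = p'.1.2 then (1:ℝ) else 0)
                - (if p'.1.2 = p.1.1 then (1:ℝ) else 0) * (if p.1.2 = p'.1.1 then (1:ℝ) else 0) = 0 := by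
              rcases eq_or_ne p'.1.1 p.1.1 with he1 | he1
              · rcases eq_or_ne p.1.2 p'.1.2 with he2 | he2
                · exact absurd (Subtype.ext (Prod.ext he1 he2.symm)) hnep
                · rcases eq_or_ne p'.1.2 p.1.1 with he3 | he3
                  · exfalso
                    have hp' := p'.2
                    rw [he3, ← he1] at hp'
                    exact absurd hp' (lt_irrefl _)
                  · simp [he2, he3]
              · rcases eq_or_ne p'.1.2 p.1.1 with he3 | he3
                · rcases eq_or_ne p.1.2 p'.1.1 with he4 | he4
                  · exfalso
                    have hp' := p'.2
                    rw [he3, ← he4] at hp'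
                    exact absurd (lt_trans hp' p.2) (lt_irrefl _)
                  · simp [he1, he4]
                · simp [he1, he3]
            rw [hz, mul_zero]
          · intro hnp
            exact absurd (Finset.mem_univ p) hnp
        rw [hA0] at h1
        simpa using h1.symm
      have hceq : c = 0 := funext hc
      rw [hceq, ht]; rfl
    have hDcard : Fintype.card D = (finrank ℝ ↥P).choose 2 := card_lt_pairs _
    have hfr2 : finrank ℝ ((D → ℝ) × H) = (finrank ℝ ↥P).choose 2 + d := by
      rw [Module.finrank_prod, Module.finrank_pi, hDcard, hH]
    have hle : finrank ℝ ((D → ℝ) × H) ≤ finrank ℝ (mSpace H iY jY q h) := by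
      rw [← LinearMap.finrank_range_of_inj hΦinj]
      exact Submodule.finrank_mono hΦrange
    have hPfr : finrank ℝ ↥P = d - k' := by omega
    calc d + (d - k').choose 2 = finrank ℝ ((D → ℝ) × H) := by
          rw [hfr2, hPfr, Nat.add_comm]
      _ ≤ _ := hle

/-! ### Bounding the real rank of the image of the gain space -/

/-- The isomorphism `(Fin d → ℝ) ≃ₗ EuclideanSpace ℝ (Fin d)`. -/
def toEuc (d : ℕ) : (Fin d → ℝ) ≃ₗ[ℝ] EuclideanSpace ℝ (Fin d) :=
  (WithLp.linearEquiv 2 ℝ (Fin d → ℝ)).symm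

lemma span_image_rank_le {d : ℕ} (Γ : Submodule ℤ (Fin d → ℤ))
    (F : (Fin d → ℤ) →ₗ[ℤ] EuclideanSpace ℝ (Fin d)) {T : Type*} (f : T → EuclideanSpace ℝ (Fin d))
    (hf : ∀ t, ∃ g ∈ Γ, F g = f t) :
    finrank ℝ (span ℝ (Set.range f)) ≤ finrank ℤ Γ := by
  classical
  obtain ⟨nB, B⟩ := Submodule.basisOfPid (Pi.basisFun ℤ (Fin d)) Γ
  have hkB : finrank ℤ Γ = nB := by
    rw [finrank_eq_card_basis B, Fintype.card_fin]
  set FF : ↥Γ →ₗ[ℤ] EuclideanSpace ℝ (Fin d) := F.comp Γ.subtype with hFF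
  set f' : Fin nB → EuclideanSpace ℝ (Fin d) := fun i => FF (B i) with hf'
  have hsub : Set.range f ⊆ ↑(span ℝ (Set.range f')) := by
    rintro x ⟨t, rfl⟩
    obtain ⟨g, hg, hFg⟩ := hf t
    have hgf : F g = ∑ i, (B.repr ⟨g, hg⟩ i) • f' i := by
      calc F g = FF ⟨g, hg⟩ := rfl
        _ = FF (∑ i, B.repr ⟨g, hg⟩ i • B i) := by rw [B.sum_repr]
        _ = ∑ i, (B.repr ⟨g, hg⟩ i) • FF (B i) := by
            rw [map_sum]
            exact Finset.sum_congr rfl fun i _ => by rw [LinearMap.map_smul]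
    rw [← hFg, hgf]
    apply Submodule.sum_mem
    intro i _
    rw [← Int.cast_smul_eq_zsmul ℝ]
    exact Submodule.smul_mem _ _ (Submodule.subset_span ⟨i, rfl⟩)
  have hle : span ℝ (Set.range f) ≤ span ℝ (Set.range f') := span_le.mpr hsub
  have h2 : finrank ℝ (span ℝ (Set.range f')) ≤ nB := by
    have himg : Set.range f' = ↑(Finset.image f' Finset.univ) := by
      simp [Finset.coe_image]
    rw [himg]
    exact le_trans (finrank_span_finset_le_card _) (le_trans (Finset.card_image_le)
      (by simp))
  calc finrank ℝ (span ℝ (Set.range f)) ≤ finrank ℝ (span ℝ (Set.range f')) :=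
        Submodule.finrank_mono hle
    _ ≤ nB := h2
    _ = finrank ℤ Γ := hkB.symm

end PeriodicAux

end

/-- Necessary count for minimal rigidity on the fixed torus. -/
theorem minimally_rigid_intermediate_count (d : ℕ) (hd : 1 ≤ d)
    (V E : Type*) [Fintype V] [Fintype E] [DecidableEq V] [DecidableEq E]
    (ie je : E → V) (m : E → Fin d → ℤ) (p : V → Fin d → ℝ)
    (L : Matrix (Fin d) (Fin d) ℝ) (hL : IsUnit L)
    (hrigid : ∀ u : V → Fin d → ℝ, IsMotion d ie je m p L u → ∀ v w : V, u v = u w)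
    (hcount : Fintype.card E = d * Fintype.card V - d) :
    ∀ Y : Finset E, d ≤ (Y.image ie ∪ Y.image je).card →
      (Y.card : ℤ) ≤ d * ((Y.image ie ∪ Y.image je).card : ℤ) - (d + 1).choose 2 +
        ∑ i ∈ Finset.Icc 1 (Module.finrank ℤ (gainSpaceOf d ie je m (↑Y : Set E))),
          ((d : ℤ) - (i : ℤ)) := by
  classical
  intro Y hY
  open PeriodicAux Module Submodule in
  set SS : Finset V := Y.image ie ∪ Y.image je with hSS
  set Γ : Submodule ℤ (Fin d → ℤ) := gainSpaceOf d ie je m (↑Y : Set E) with hΓ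
  set k : ℕ := Module.finrank ℤ Γ with hkdef
  have hkd : k ≤ d := by
    have h1 : Module.finrank ℤ Γ ≤ Module.finrank ℤ (Fin d → ℤ) := Submodule.finrank_le _
    have h2 : Module.finrank ℤ (Fin d → ℤ) = d := by
      rw [Module.finrank_pi ℤ, Fintype.card_fin]
    omega
  -- nonemptiness
  have hSSne : SS.Nonempty := Finset.card_pos.mp (lt_of_lt_of_le hd hY)
  obtain ⟨vv, hvv⟩ := hSSne
  haveI hVne : Nonempty V := ⟨vv⟩
  -- the full rigidity map
  set xvec : E → (Fin d → ℝ) :=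
    fun e => fun kk => p (ie e) kk - p (je e) kk - gainVec L (m e) kk with hxvec
  set rowf : E → ((V → Fin d → ℝ) →ₗ[ℝ] ℝ) := fun e =>
    ({ toFun := fun w => w ⬝ᵥ xvec e
       map_add' := fun a b => add_dotProduct a b (xvec e)
       map_smul' := fun r a => smul_dotProduct r a (xvec e) } :
         (Fin d → ℝ) →ₗ[ℝ] ℝ).comp
      ((LinearMap.proj (ie e) : (V → Fin d → ℝ) →ₗ[ℝ] (Fin d → ℝ))
        - LinearMap.proj (je e)) with hrowf
  set Tfull : (V → Fin d → ℝ) →ₗ[ℝ] (E → ℝ) := LinearMap.pi rowf with hTfull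
  have hTfull_iff : ∀ u : V → Fin d → ℝ, Tfull u = 0 ↔ IsMotion d ie je m p L u := by
    intro u
    constructor
    · intro hu e
      exact congrFun hu e
    · intro hu
      funext e
      exact hu e
  -- the kernel of Tfull consists of the constants
  set cmap : (Fin d → ℝ) →ₗ[ℝ] (V → Fin d → ℝ) :=
    LinearMap.pi (fun _ => LinearMap.id) with hcmap
  have hker : LinearMap.ker Tfull = LinearMap.range cmap := by
    apply le_antisymm
    · intro u hu
      have hm : IsMotion d ie je m p L u := (hTfull_iff u).mp (LinearMap.mem_ker.mp hu)
      have hcst := hrigid u hm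
      exact ⟨u vv, funext fun w => hcst vv w⟩
    · rintro _ ⟨t, rfl⟩
      rw [LinearMap.mem_ker]
      funext e
      show (cmap t (ie e) - cmap t (je e)) ⬝ᵥ xvec e = 0
      show (t - t) ⬝ᵥ xvec e = 0
      rw [sub_self, zero_dotProduct]
  have hcmap_inj : Function.Injective cmap := fun a b hab => congrFun hab vv
  have hfker : Module.finrank ℝ (LinearMap.ker Tfull) = d := by
    rw [hker, LinearMap.finrank_range_of_inj hcmap_inj, Module.finrank_pi ℝ,
      Fintype.card_fin]
  have hfdom : Module.finrank ℝ (V → Fin d → ℝ) = Fintype.card V * d := by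
    rw [Module.finrank_pi_fintype]
    simp [Module.finrank_pi, Fintype.card_fin, Finset.sum_const, smul_eq_mul]
  have hcardV : 1 ≤ Fintype.card V := Fintype.card_pos
  have hsurj : Function.Surjective Tfull := by
    rw [← LinearMap.range_eq_top]
    apply Submodule.eq_top_of_finrank_eq
    have h1 := LinearMap.finrank_range_add_finrank_ker Tfull
    rw [hfker, hfdom] at h1
    rw [Module.finrank_fintype_fun_eq_card]
    have h2 : d ≤ d * Fintype.card V := Nat.le_mul_of_pos_right d (by omega)
    have h3 : Fintype.card V * d = d * Fintype.card V := Nat.mul_comm _ _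
    rw [h3] at h1
    generalize hPP : d * Fintype.card V = PP at h1 hcount h2
    omega
  -- the walk equivalence and the potential γ
  set rel : V → V → Prop :=
    fun a b_ => ∃ w, IsWalk ie je a w b_ ∧ ∀ ed ∈ w, ed.1 ∈ Y with hreldef
  have hrefl : ∀ a, rel a a := fun a => ⟨[], rfl, by simp⟩
  have hsymm : ∀ {a b_}, rel a b_ → rel b_ a := by
    rintro a b_ ⟨w, hw, hwY⟩
    exact ⟨PeriodicAux.revWalk w, PeriodicAux.isWalk_rev ie je hw,
      PeriodicAux.revWalk_edges hwY⟩
  have htrans : ∀ {a b_ c_}, rel a b_ → rel b_ c_ → rel a c_ := by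
    rintro a b_ c_ ⟨w1, h1, hY1⟩ ⟨w2, h2, hY2⟩
    refine ⟨w1 ++ w2, PeriodicAux.isWalk_append ie je h1 h2, ?_⟩
    intro ed hed
    rcases List.mem_append.mp hed with hh | hh
    exacts [hY1 ed hh, hY2 ed hh]
  set st : Setoid V := ⟨rel, ⟨hrefl, hsymm, htrans⟩⟩ with hst
  set rep : V → V := fun v => (Quotient.mk st v).out with hrepdef
  have hrep : ∀ v, rel (rep v) v :=
    fun v => Quotient.exact (Quotient.out_eq (Quotient.mk st v))
  set gam : V → (Fin d → ℤ) := fun v => netGain m (Classical.choose (hrep v)) with hgam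
  have hgamspec : ∀ v, IsWalk ie je (rep v) (Classical.choose (hrep v)) v ∧
      ∀ ed ∈ Classical.choose (hrep v), ed.1 ∈ Y := fun v => Classical.choose_spec (hrep v)
  have hsame : ∀ e ∈ Y, rep (ie e) = rep (je e) := by
    intro e he
    have h1 : rel (ie e) (je e) :=
      ⟨[(e, true)], ⟨by simp, by simp [IsWalk]⟩, by simp [he]⟩
    have h2 : Quotient.mk st (ie e) = Quotient.mk st (je e) := Quotient.sound h1
    exact congrArg Quotient.out h2
  have hgmem : ∀ e ∈ Y, gam (ie e) + m e - gam (je e) ∈ Γ := by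
    intro e he
    obtain ⟨hwi, hwiY⟩ := hgamspec (ie e)
    obtain ⟨hwj, hwjY⟩ := hgamspec (je e)
    have hmid : IsWalk ie je (ie e) [(e, true)] (je e) := ⟨by simp, by simp [IsWalk]⟩
    have hw2 : IsWalk ie je (ie e)
        ([(e, true)] ++ PeriodicAux.revWalk (Classical.choose (hrep (je e)))) (rep (je e)) :=
      PeriodicAux.isWalk_append ie je hmid (PeriodicAux.isWalk_rev ie je hwj)
    have hw3 : IsWalk ie je (rep (ie e))
        (Classical.choose (hrep (ie e)) ++
          ([(e, true)] ++ PeriodicAux.revWalk (Classical.choose (hrep (je e)))))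
        (rep (je e)) :=
      PeriodicAux.isWalk_append ie je hwi hw2
    have hw4 : IsWalk ie je (rep (ie e))
        ((Classical.choose (hrep (ie e)) ++
          ([(e, true)] ++ PeriodicAux.revWalk (Classical.choose (hrep (je e))))) ++ [])
        (rep (ie e)) :=
      PeriodicAux.isWalk_append ie je hw3 ((hsame e he).symm)
    rw [List.append_nil] at hw4
    refine Submodule.subset_span ⟨rep (ie e), _, hw4, ?_, ?_⟩
    · intro ed hed
      rcases List.mem_append.mp hed with hh | hh
      · exact Finset.mem_coe.mpr (hwiY ed hh)
      · rcases List.mem_append.mp hh with hh' | hh'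
        · have : ed = (e, true) := by simpa using hh'
          rw [this]
          exact Finset.mem_coe.mpr he
        · exact Finset.mem_coe.mpr
            (PeriodicAux.revWalk_edges hwjY ed hh')
    · rw [PeriodicAux.netGain_append, PeriodicAux.netGain_append,
        PeriodicAux.netGain_rev, PeriodicAux.netGain_single]
      show gam (ie e) + ((if true then m e else -m e) + -gam (je e))
        = gam (ie e) + m e - gam (je e)
      rw [if_pos rfl]
      abel
  -- Euclidean setup
  have hieS : ∀ e : {x // x ∈ Y}, ie e.1 ∈ SS :=
    fun e => Finset.mem_union_left _ (Finset.mem_image_of_mem ie e.2)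
  have hjeS : ∀ e : {x // x ∈ Y}, je e.1 ∈ SS :=
    fun e => Finset.mem_union_right _ (Finset.mem_image_of_mem je e.2)
  set iS : {x // x ∈ Y} → {x // x ∈ SS} := fun e => ⟨ie e.1, hieS e⟩ with hiS
  set jS : {x // x ∈ Y} → {x // x ∈ SS} := fun e => ⟨je e.1, hjeS e⟩ with hjS
  set q : {x // x ∈ SS} → EuclideanSpace ℝ (Fin d) :=
    fun v => PeriodicAux.toEuc d (fun kk => p v.1 kk + gainVec L (gam v.1) kk) with hq
  set hvecs : {x // x ∈ Y} → EuclideanSpace ℝ (Fin d) :=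
    fun e => PeriodicAux.toEuc d (gainVec L (gam (ie e.1) + m e.1 - gam (je e.1))) with hhv
  -- rank of the span of the h-vectors
  set F : (Fin d → ℤ) →ₗ[ℤ] EuclideanSpace ℝ (Fin d) :=
    ((PeriodicAux.toEuc d).toLinearMap.restrictScalars ℤ).comp
      ({ toFun := fun z => gainVec L z
         map_add' := fun a b => PeriodicAux.gainVec_add L a b
         map_smul' := fun c z => by
           simp only [RingHom.id_apply]
           rw [PeriodicAux.gainVec_zsmul L c z, ← Int.cast_smul_eq_zsmul ℝ] } :
        (Fin d → ℤ) →ₗ[ℤ] (Fin d → ℝ)) with hF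
  have hk'k : Module.finrank ℝ (Submodule.span ℝ (Set.range hvecs)) ≤ k := by
    rw [hkdef]
    apply PeriodicAux.span_image_rank_le Γ F hvecs
    intro e
    exact ⟨gam (ie e.1) + m e.1 - gam (je e.1), hgmem e.1 e.2, rfl⟩
  -- the restricted map and its kernel
  set TY : ({x // x ∈ SS} → EuclideanSpace ℝ (Fin d)) →ₗ[ℝ] ({x // x ∈ Y} → ℝ) :=
    LinearMap.pi (fun e =>
      ((innerSL ℝ (q (iS e) - q (jS e) - hvecs e)).toLinearMap).comp
        ((LinearMap.proj (iS e) :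
            ({x // x ∈ SS} → EuclideanSpace ℝ (Fin d)) →ₗ[ℝ] EuclideanSpace ℝ (Fin d))
          - LinearMap.proj (jS e))) with hTY
  have hkerTY : LinearMap.ker TY = PeriodicAux.mSpace (EuclideanSpace ℝ (Fin d)) iS jS q hvecs := by
    rw [hTY, LinearMap.ker_pi]
    rfl
  have hTYapp : ∀ (u : {x // x ∈ SS} → EuclideanSpace ℝ (Fin d)) (e : {x // x ∈ Y}),
      TY u e = (inner ℝ (q (iS e) - q (jS e) - hvecs e) (u (iS e) - u (jS e)) : ℝ) := by
    intro u e
    simp only [hTY, LinearMap.pi_apply, LinearMap.comp_apply, LinearMap.sub_apply,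
      LinearMap.proj_apply, ContinuousLinearMap.coe_coe, innerSL_apply_apply]
  have hxq : ∀ e : {x // x ∈ Y},
      q (iS e) - q (jS e) - hvecs e = PeriodicAux.toEuc d (xvec e.1) := by
    intro e
    rw [hq, hhv, ← map_sub (PeriodicAux.toEuc d), ← map_sub (PeriodicAux.toEuc d)]
    congr 1
    funext kk
    have hsub := congrFun (PeriodicAux.gainVec_sub L (gam (ie e.1) + m e.1) (gam (je e.1))) kk
    have hadd2 := congrFun (PeriodicAux.gainVec_add L (gam (ie e.1)) (m e.1)) kk
    simp only [Pi.sub_apply, Pi.add_apply] at hsub hadd2 ⊢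
    show p (ie e.1) kk + gainVec L (gam (ie e.1)) kk
        - (p (je e.1) kk + gainVec L (gam (je e.1)) kk)
        - gainVec L (gam (ie e.1) + m e.1 - gam (je e.1)) kk
      = p (ie e.1) kk - p (je e.1) kk - gainVec L (m e.1) kk
    have h6 : gainVec L (gam (ie e.1) + m e.1 - gam (je e.1)) kk
        = gainVec L (gam (ie e.1)) kk + gainVec L (m e.1) kk - gainVec L (gam (je e.1)) kk := by
      rw [hsub, hadd2]
    rw [h6]
    ring
  have hinnerdot : ∀ (x y : Fin d → ℝ),
      (inner ℝ (PeriodicAux.toEuc d x) (PeriodicAux.toEuc d y) : ℝ) = y ⬝ᵥ x := by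
    intro x y
    rw [PiLp.inner_apply]
    simp only [RCLike.inner_apply, conj_trivial]
    unfold dotProduct
    apply Finset.sum_congr rfl
    intro i _
    show y i * x i = y i * x i
    ring
  have hTYsurj : Function.Surjective TY := by
    intro bb
    obtain ⟨u, hu⟩ := hsurj (fun e => if he : e ∈ Y then bb ⟨e, he⟩ else 0)
    refine ⟨fun s => PeriodicAux.toEuc d (u s.1), ?_⟩
    funext e
    rw [hTYapp, hxq, ← map_sub (PeriodicAux.toEuc d), hinnerdot]
    have h7 := congrFun hu e.1
    have h8 : Tfull u e.1 = (u (ie e.1) - u (je e.1)) ⬝ᵥ xvec e.1 := rfl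
    rw [h8] at h7
    rw [h7]
    simp [e.2]
  -- rank-nullity for TY
  have hrn := LinearMap.finrank_range_add_finrank_ker TY
  have hrange : Module.finrank ℝ (LinearMap.range TY) = Y.card := by
    rw [LinearMap.range_eq_top.mpr hTYsurj, finrank_top,
      Module.finrank_fintype_fun_eq_card, Fintype.card_coe]
  have hdomain : Module.finrank ℝ ({x // x ∈ SS} → EuclideanSpace ℝ (Fin d))
      = SS.card * d := by
    rw [Module.finrank_pi_fintype]
    simp [finrank_euclideanSpace_fin, Finset.sum_const, smul_eq_mul, Fintype.card_coe]
  rw [hrange, hdomain, hkerTY] at hrn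
  -- the core bound
  have hcore := PeriodicAux.core d (EuclideanSpace ℝ (Fin d)) {x // x ∈ SS} {x // x ∈ Y}
    iS jS q hvecs finrank_euclideanSpace_fin (by rw [Fintype.card_coe]; exact hY)
  have hchoose : (d - k).choose 2
      ≤ (d - Module.finrank ℝ (Submodule.span ℝ (Set.range hvecs))).choose 2 :=
    Nat.choose_le_choose 2 (Nat.sub_le_sub_left hk'k d)
  have hM : d + (d - k).choose 2
      ≤ Module.finrank ℝ (PeriodicAux.mSpace (EuclideanSpace ℝ (Fin d)) iS jS q hvecs) :=
    le_trans (Nat.add_le_add_left hchoose d) hcore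
  -- final arithmetic
  rw [PeriodicAux.sum_Icc_identity d k hkd]
  have h1 : Y.card + (d + (d - k).choose 2) ≤ SS.card * d := by omega
  have h2 : ((Y.card : ℤ)) + ((d : ℤ) + ((d - k).choose 2 : ℤ)) ≤ (SS.card : ℤ) * (d : ℤ) := by
    exact_mod_cast h1
  push_cast
  linarith [h2]
end

section
/- Let L be a d×d real matrix and let f : [0,1] → ℝ^d be any function (for a motion of a periodic orbit framework, f(t) = P_i(t) - P_j(t) for a pair of joints). If ‖f(t) - mL‖ = ‖f(0) - mL‖ for all t ∈ [0,1] and all m ∈ {-1,0,1}^d, then ‖f(t) - zL‖ = ‖f(0) - zL‖ for all t ∈ [0,1] and all z ∈ ℤ^d. In particular, a rigid motion of a periodic orbit framework on the fixed torus preserves the length of the segment {p_i, p_j; m} for every pair of vertices and every m ∈ ℤ^d. -/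
open Matrix

/-- If a function `f : [0,1] → ℝ^d` (e.g. `f(t) = P_i(t) - P_j(t)` for a motion of a
periodic orbit framework) satisfies `‖f(t) - mL‖ = ‖f(0) - mL‖` for all `t ∈ [0,1]` and
all `m ∈ {-1,0,1}^d`, then `‖f(t) - zL‖ = ‖f(0) - zL‖` for all `t ∈ [0,1]` and all
`z ∈ ℤ^d`; in particular a rigid motion of a periodic orbit framework on the fixed torus
preserves the length of the segment `{p_i, p_j; m}` for every `m ∈ ℤ^d`. -/
theorem rigid_motion_preserves_all_lengths (d : ℕ) (hd : 1 ≤ d)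
    (L : Matrix (Fin d) (Fin d) ℝ)
    (f : ℝ → EuclideanSpace ℝ (Fin d))
    (h : ∀ t ∈ Set.Icc (0 : ℝ) 1, ∀ m : Fin d → ℤ,
      (∀ k, m k = -1 ∨ m k = 0 ∨ m k = 1) →
      ‖f t - (WithLp.equiv 2 (Fin d → ℝ)).symm (gainVec L m)‖ =
        ‖f 0 - (WithLp.equiv 2 (Fin d → ℝ)).symm (gainVec L m)‖) :
    ∀ t ∈ Set.Icc (0 : ℝ) 1, ∀ z : Fin d → ℤ,
      ‖f t - (WithLp.equiv 2 (Fin d → ℝ)).symm (gainVec L z)‖ =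
        ‖f 0 - (WithLp.equiv 2 (Fin d → ℝ)).symm (gainVec L z)‖ := by
  intro t ht z
  -- Step 1: the case `m = 0` gives `‖f t‖ = ‖f 0‖`.
  have h0 : ‖f t‖ = ‖f 0‖ := by
    have e : gainVec L (0 : Fin d → ℤ) = 0 := by
      funext i; simp [gainVec, Matrix.vecMul, dotProduct]
    have := h t ht 0 (fun k => Or.inr (Or.inl rfl))
    rw [e] at this
    simpa using this
  -- Step 2: for any vector `v`, length preservation relative to `v` is equivalent to
  -- orthogonality of `f t - f 0` to `v`.
  have key : ∀ v : EuclideanSpace ℝ (Fin d),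
      ‖f t - v‖ = ‖f 0 - v‖ ↔ inner ℝ (f t - f 0) v = (0 : ℝ) := by
    intro v
    rw [← sq_eq_sq₀ (norm_nonneg _) (norm_nonneg _), norm_sub_sq_real, norm_sub_sq_real,
      inner_sub_left, h0]
    constructor <;> intro hh <;> nlinarith [hh]
  -- Step 3: orthogonality for the standard basis vectors.
  have hk : ∀ k : Fin d, inner ℝ (f t - f 0)
      ((WithLp.equiv 2 (Fin d → ℝ)).symm (gainVec L (Pi.single k 1))) = (0 : ℝ) := by
    intro k
    refine (key _).mp (h t ht (Pi.single k 1) (fun j => ?_))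
    by_cases hj : j = k <;> simp [Pi.single_apply, hj]
  -- componentwise form
  have hk' : ∀ k : Fin d, ∑ i, (f t - f 0) i * L k i = 0 := by
    intro k
    have := hk k
    simpa [PiLp.inner_apply, gainVec, Matrix.vecMul, dotProduct, Pi.single_apply,
      apply_ite, ite_mul, mul_comm] using this
  -- Step 4: conclude by linearity.
  refine (key _).mpr ?_
  have hexp : ∀ i, ((WithLp.equiv 2 (Fin d → ℝ)).symm (gainVec L z)) i
      = ∑ j, (z j : ℝ) * L j i := by
    intro i; simp [gainVec, Matrix.vecMul, dotProduct]
  rw [PiLp.inner_apply]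
  simp only [RCLike.inner_apply, conj_trivial, hexp]
  rw [Finset.sum_congr rfl fun i _ => mul_comm _ _]
  calc ∑ i, (f t - f 0) i * ∑ j, (z j : ℝ) * L j i
      = ∑ j, (z j : ℝ) * ∑ i, (f t - f 0) i * L j i := by
        simp_rw [Finset.mul_sum]
        rw [Finset.sum_comm]
        exact Finset.sum_congr rfl fun j _ => Finset.sum_congr rfl fun i _ => by ring
    _ = 0 := by
        refine Finset.sum_eq_zero fun j _ => ?_
        rw [hk' j, mul_zero]
end
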